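/- Let f : ℝ^m → ℝ^m be a C¹ diffeomorphism that has the Lipschitz shadowing property with constants 𝓛, d₀ > 0. Let p : ℤ → ℝ^m be a complete trajectory of f (i.e. p_{k+1} = f(p_k) for all k ∈ ℤ) and set A_k = Df(p_k). Assume there is a constant N > 0 with ‖A_k‖ ≤ N for all k ∈ ℤ, and that f is uniformly differentiable along the trajectory: for every μ > 0 there exists δ > 0 such that for all k ∈ ℤ and all v ∈ ℝ^m with ‖v‖ ≤ δ one has ‖f(p_k + v) − p_{k+1} − A_k v‖ ≤ μ‖v‖. Then for any sequence {w_k ∈ ℝ^m, k ∈ ℤ} with ‖w_k‖ < 1 for all k ∈ ℤ, there exists a sequence {v_k ∈ ℝ^m, k ∈ ℤ} such that ‖v_k‖ ≤ 8𝓛 + 1 and v_{k+1} = A_k v_k + w_k for all k ∈ ℤ. -/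

import Mathlib

open Filter Topology

/-- `f` has the Lipschitz shadowing property with constants `L`, `d₀`: every
`d`-pseudotrajectory with `0 < d ≤ d₀` is `L·d`-shadowed by a complete trajectory of `f`. -/
def LipschitzShadowing {m : ℕ} (f : EuclideanSpace ℝ (Fin m) → EuclideanSpace ℝ (Fin m))
    (L d₀ : ℝ) : Prop :=
  ∀ d : ℝ, 0 < d → d ≤ d₀ →
    ∀ x : ℤ → EuclideanSpace ℝ (Fin m),
      (∀ k : ℤ, ‖x (k + 1) - f (x k)‖ < d) →
      ∃ q : ℤ → EuclideanSpace ℝ (Fin m),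
        (∀ k : ℤ, q (k + 1) = f (q k)) ∧ ∀ k : ℤ, ‖x k - q k‖ ≤ L * d

set_option maxHeartbeats 1000000


/-- Solution of the inhomogeneous linear difference equation, started at `0` at time `-n`. -/
def ySeq {m : ℕ} (A : ℤ → (EuclideanSpace ℝ (Fin m) →L[ℝ] EuclideanSpace ℝ (Fin m)))
    (w : ℤ → EuclideanSpace ℝ (Fin m)) (n : ℕ) : ℕ → EuclideanSpace ℝ (Fin m)
  | 0 => 0
  | (i+1) => A ((i:ℤ) - (n:ℤ)) (ySeq A w n i) + w ((i:ℤ) - (n:ℤ))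

theorem stage_lemma {m : ℕ} (f : EuclideanSpace ℝ (Fin m) → EuclideanSpace ℝ (Fin m))
    (L d₀ : ℝ) (hL : 0 < L) (hd₀ : 0 < d₀)
    (hshadow : ∀ d : ℝ, 0 < d → d ≤ d₀ →
      ∀ x : ℤ → EuclideanSpace ℝ (Fin m),
        (∀ k : ℤ, ‖x (k + 1) - f (x k)‖ < d) →
        ∃ q : ℤ → EuclideanSpace ℝ (Fin m),
          (∀ k : ℤ, q (k + 1) = f (q k)) ∧ ∀ k : ℤ, ‖x k - q k‖ ≤ L * d)
    (p : ℤ → EuclideanSpace ℝ (Fin m)) (hp : ∀ k : ℤ, p (k + 1) = f (p k))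
    (A : ℤ → (EuclideanSpace ℝ (Fin m) →L[ℝ] EuclideanSpace ℝ (Fin m)))
    (N : ℝ) (hN : 0 < N) (hAbound : ∀ k : ℤ, ‖A k‖ ≤ N)
    (hunif : ∀ μ : ℝ, 0 < μ → ∃ δ : ℝ, 0 < δ ∧
      ∀ k : ℤ, ∀ v : EuclideanSpace ℝ (Fin m), ‖v‖ ≤ δ →
        ‖f (p k + v) - p (k + 1) - A k v‖ ≤ μ * ‖v‖)
    (w : ℤ → EuclideanSpace ℝ (Fin m)) (hw : ∀ k : ℤ, ‖w k‖ < 1)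
    (n : ℕ) (hn : 0 < n) :
    ∃ v : ℤ → EuclideanSpace ℝ (Fin m),
      (∀ k : ℤ, ‖v k‖ ≤ 2 * L) ∧
      ∀ k : ℤ, -(n:ℤ) ≤ k → k < (n:ℤ) →
        ‖v (k + 1) - A k (v k) - w k‖ ≤ 1 / (n:ℝ) := by
  -- the linear inhomogeneous solution starting at 0 at time -n
  let y : ℕ → EuclideanSpace ℝ (Fin m) := ySeq A w n
  have ysucc : ∀ i : ℕ, y (i+1) = A ((i:ℤ) - (n:ℤ)) (y i) + w ((i:ℤ) - (n:ℤ)) := fun i => rfl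
  have ybound : ∀ i : ℕ, ‖y i‖ ≤ (N+2)^i := by
    intro i
    induction i with
    | zero => simp [y, ySeq]
    | succ i ih =>
      have h1 : ‖A ((i:ℤ) - (n:ℤ)) (y i)‖ ≤ N * (N+2)^i := by
        calc ‖A ((i:ℤ) - (n:ℤ)) (y i)‖ ≤ ‖A ((i:ℤ) - (n:ℤ))‖ * ‖y i‖ :=
          (A _).le_opNorm _
        _ ≤ N * (N+2)^i := by
          apply mul_le_mul (hAbound _) ih (norm_nonneg _) hN.le
      have h2 : (1:ℝ) ≤ (N+2)^i := one_le_pow₀ (by linarith)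
      calc ‖y (i+1)‖ ≤ ‖A ((i:ℤ) - (n:ℤ)) (y i)‖ + ‖w ((i:ℤ) - (n:ℤ))‖ := by
            rw [ysucc]; exact norm_add_le _ _
      _ ≤ N * (N+2)^i + 1 := add_le_add h1 (hw _).le
      _ ≤ (N+2)^(i+1) := by rw [pow_succ]; nlinarith
  let z : ℤ → EuclideanSpace ℝ (Fin m) := fun k => y (k + (n:ℤ)).toNat
  have z0 : ∀ k : ℤ, k ≤ -(n:ℤ) → z k = 0 := by
    intro k hk
    have : (k + (n:ℤ)).toNat = 0 := by omega
    simp only [z, this]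
    rfl
  have zrec : ∀ k : ℤ, -(n:ℤ) ≤ k → z (k+1) = A k (z k) + w k := by
    intro k hk
    have h1 : (k + 1 + (n:ℤ)).toNat = (k + (n:ℤ)).toNat + 1 := by omega
    have h2 : ((k + (n:ℤ)).toNat : ℤ) - (n:ℤ) = k := by omega
    simp only [z, h1, ysucc, h2]
  set B : ℝ := (N+2)^(2*n) with hB
  have hB1 : (1:ℝ) ≤ B := one_le_pow₀ (by linarith)
  have zbound : ∀ k : ℤ, k ≤ (n:ℤ) → ‖z k‖ ≤ B := by
    intro k hk
    calc ‖z k‖ ≤ (N+2)^((k + (n:ℤ)).toNat) := ybound _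
    _ ≤ B := pow_le_pow_right₀ (by linarith) (by omega)
  -- choose the smallness parameters
  have hLB : (0:ℝ) < 2*L + B + 1 := by linarith
  set μ : ℝ := 1 / ((n:ℝ) * (2*L + B + 1)) with hμ
  have hnR : (0:ℝ) < (n:ℝ) := by exact_mod_cast hn
  have hμpos : 0 < μ := by positivity
  obtain ⟨δ, hδ, hdiff⟩ := hunif μ hμpos
  set d : ℝ := min (d₀/2) (δ/(2*L + B + 1)) with hdd
  have hd : 0 < d := lt_min (by linarith) (by positivity)
  have hdne : d ≠ 0 := ne_of_gt hd
  have hdδ : d * (2*L + B) ≤ δ := by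
    have h1 : d ≤ δ/(2*L + B + 1) := min_le_right _ _
    have h2 : d * (2*L + B) ≤ (δ/(2*L + B + 1)) * (2*L + B + 1) := by
      apply mul_le_mul h1 (by linarith) (by linarith) (by positivity)
    rw [div_mul_cancel₀ _ (ne_of_gt hLB)] at h2
    exact h2
  have hdB : d * B ≤ δ := by nlinarith
  have hμB : μ * B ≤ 1 := by
    rw [hμ]
    rw [div_mul_eq_mul_div, div_le_one (by positivity)]
    have h1 : (1:ℝ) ≤ (n:ℝ) := by exact_mod_cast hn
    nlinarith
  have hμerr : μ * (2*L + B) ≤ 1 / (n:ℝ) := by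
    rw [hμ, div_mul_eq_mul_div, div_le_div_iff₀ (by positivity) hnR]
    nlinarith
  set d' : ℝ := d * (1 + μ * B) with hd'
  have hd'pos : 0 < d' := by
    have : (0:ℝ) < 1 + μ * B := by positivity
    positivity
  have hd'le2 : d' ≤ 2 * d := by nlinarith
  have hd'led₀ : d' ≤ d₀ := by
    have : d ≤ d₀/2 := min_le_left _ _
    linarith
  have hdled' : d ≤ d' := by
    have h0 : 0 ≤ μ * B := by positivity
    nlinarith
  -- the pseudotrajectory
  set c : EuclideanSpace ℝ (Fin m) := p (n:ℤ) + d • z (n:ℤ) with hc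
  set x : ℤ → EuclideanSpace ℝ (Fin m) :=
    fun k => if k ≤ (n:ℤ) then p k + d • z k else f^[(k - (n:ℤ)).toNat] c with hx
  have xle : ∀ k : ℤ, k ≤ (n:ℤ) → x k = p k + d • z k := by
    intro k hk; simp only [x, if_pos hk]
  have xiter : ∀ k : ℤ, (n:ℤ) ≤ k → x k = f^[(k - (n:ℤ)).toNat] c := by
    intro k hk
    by_cases h : k ≤ (n:ℤ)
    · have hkn : k = (n:ℤ) := le_antisymm h hk
      have h0 : (k - (n:ℤ)).toNat = 0 := by omega
      rw [xle k h, h0, Function.iterate_zero_apply, hkn, hc]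
    · simp only [x, if_neg h]
  have pseudo : ∀ k : ℤ, ‖x (k+1) - f (x k)‖ < d' := by
    intro k
    rcases lt_or_ge k (-(n:ℤ)) with hk | hk
    · -- k < -n : the pseudotrajectory equals p there
      have h1 : x k = p k := by
        rw [xle k (by omega), z0 k (by omega), smul_zero, add_zero]
      have h2 : x (k+1) = p (k+1) := by
        rw [xle (k+1) (by omega), z0 (k+1) (by omega), smul_zero, add_zero]
      rw [h1, h2, hp k, sub_self, norm_zero]
      exact hd'pos
    rcases lt_or_ge k (n:ℤ) with hk2 | hk2
    · -- -n ≤ k < n : the perturbation estimate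
      have h1 : x k = p k + d • z k := xle k (by omega)
      have h2 : x (k+1) = p (k+1) + d • (A k (z k) + w k) := by
        rw [xle (k+1) (by omega), zrec k hk]
      have hnu : ‖d • z k‖ ≤ δ := by
        rw [norm_smul, Real.norm_eq_abs, abs_of_pos hd]
        calc d * ‖z k‖ ≤ d * B :=
          mul_le_mul_of_nonneg_left (zbound k (by omega)) hd.le
        _ ≤ δ := hdB
      have hest := hdiff k (d • z k) hnu
      have key : x (k+1) - f (x k)
          = d • w k - (f (p k + d • z k) - p (k+1) - A k (d • z k)) := by
        rw [h1, h2, map_smul, smul_add]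
        abel
      rw [key]
      calc ‖d • w k - (f (p k + d • z k) - p (k+1) - A k (d • z k))‖
          ≤ ‖d • w k‖ + ‖f (p k + d • z k) - p (k+1) - A k (d • z k)‖ := norm_sub_le _ _
      _ ≤ d * ‖w k‖ + μ * ‖d • z k‖ := by
          rw [norm_smul, Real.norm_eq_abs, abs_of_pos hd]
          exact add_le_add le_rfl hest
      _ < d * 1 + μ * (d * B) := by
          apply add_lt_add_of_lt_of_le
          · exact mul_lt_mul_of_pos_left (hw k) hd
          · apply mul_le_mul_of_nonneg_left _ hμpos.le
            rw [norm_smul, Real.norm_eq_abs, abs_of_pos hd]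
            exact mul_le_mul_of_nonneg_left (zbound k (by omega)) hd.le
      _ = d' := by rw [hd']; ring
    · -- n ≤ k : exact trajectory of f
      have h1 : x k = f^[(k - (n:ℤ)).toNat] c := xiter k hk2
      have h2 : x (k+1) = f^[(k - (n:ℤ)).toNat + 1] c := by
        rw [xiter (k+1) (by omega)]
        congr 1
        omega
      rw [h1, h2, Function.iterate_succ_apply', sub_self, norm_zero]
      exact hd'pos
  -- apply the shadowing property
  obtain ⟨q, hq, hqx⟩ := hshadow d' hd'pos hd'led₀ x pseudo
  refine ⟨fun k => d⁻¹ • (x k - q k), ?_, ?_⟩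
  · -- uniform bound 2L
    intro k
    rw [norm_smul, Real.norm_eq_abs, abs_of_pos (inv_pos.mpr hd)]
    calc d⁻¹ * ‖x k - q k‖ ≤ d⁻¹ * (L * d') :=
      mul_le_mul_of_nonneg_left (hqx k) (inv_pos.mpr hd).le
    _ = L * (1 + μ * B) := by
        rw [hd']; field_simp
    _ ≤ 2 * L := by nlinarith
  · -- the approximate difference equation
    intro k hk hk2
    have h1 : x k = p k + d • z k := xle k (by omega)
    have h2 : x (k+1) = p (k+1) + d • (A k (z k) + w k) := by
      rw [xle (k+1) (by omega), zrec k hk]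
    have hqp2 : ‖q k - p k‖ ≤ d * (2*L + B) := by
      have e1 : q k - p k = (x k - p k) - (x k - q k) := by abel
      calc ‖q k - p k‖ ≤ ‖x k - p k‖ + ‖x k - q k‖ := by
            rw [e1]; exact norm_sub_le _ _
      _ ≤ d * B + L * d' := by
          apply add_le_add _ (hqx k)
          rw [h1, add_sub_cancel_left, norm_smul, Real.norm_eq_abs, abs_of_pos hd]
          exact mul_le_mul_of_nonneg_left (zbound k (by omega)) hd.le
      _ ≤ d * (2*L + B) := by
          have h0 := mul_le_mul_of_nonneg_left hd'le2 hL.le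
          linarith
    have hqp : ‖q k - p k‖ ≤ δ := hqp2.trans hdδ
    have hest := hdiff k (q k - p k) hqp
    have hfq : p k + (q k - p k) = q k := by abel
    rw [hfq] at hest
    have hebound : ‖f (q k) - p (k+1) - A k (q k - p k)‖ ≤ μ * (d * (2*L + B)) :=
      hest.trans (mul_le_mul_of_nonneg_left hqp2 hμpos.le)
    have hAx : A k (x k - q k) = d • A k (z k) - A k (q k - p k) := by
      rw [h1, show p k + d • z k - q k = d • z k - (q k - p k) by abel, map_sub, map_smul]
    have hq1 : q (k+1) = (f (q k) - p (k+1) - A k (q k - p k)) + (p (k+1) + A k (q k - p k)) := by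
      rw [hq k]; abel
    have key : x (k+1) - q (k+1)
        = A k (x k - q k) + d • w k - (f (q k) - p (k+1) - A k (q k - p k)) := by
      rw [h2, hq1, hAx, smul_add]
      abel
    show ‖d⁻¹ • (x (k+1) - q (k+1)) - A k (d⁻¹ • (x k - q k)) - w k‖ ≤ 1/(n:ℝ)
    have habel : ∀ (a b c : EuclideanSpace ℝ (Fin m)), a + b - c - a - b = -c := by
      intro a b c; abel
    rw [map_smul, key, smul_sub, smul_add, smul_smul, inv_mul_cancel₀ hdne, one_smul,
      habel, norm_neg, norm_smul, Real.norm_eq_abs, abs_of_pos (inv_pos.mpr hd)]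
    calc d⁻¹ * ‖f (q k) - p (k+1) - A k (q k - p k)‖
        ≤ d⁻¹ * (μ * (d * (2*L + B))) :=
          mul_le_mul_of_nonneg_left hebound (inv_pos.mpr hd).le
    _ = μ * (2*L + B) := by field_simp
    _ ≤ 1 / (n:ℝ) := hμerr

/-- **Lemma 1 of Pilyugin–Tikhomirov.** If a C¹ diffeomorphism `f` has the Lipschitz
shadowing property with constants `L, d₀`, then along any trajectory `{p_k}`, for any
sequence `{w_k}` with `‖w_k‖ < 1` there is a sequence `{v_k}` with `‖v_k‖ ≤ 8L + 1`
solving `v_{k+1} = A_k v_k + w_k` for all `k ∈ ℤ`, where `A_k = Df(p_k)`. -/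
theorem lemma1_bounded_solution
    {m : ℕ} (f g : EuclideanSpace ℝ (Fin m) → EuclideanSpace ℝ (Fin m))
    (hf : ContDiff ℝ 1 f) (hg : ContDiff ℝ 1 g)
    (hgf : Function.LeftInverse g f) (hfg : Function.RightInverse g f)
    (L d₀ : ℝ) (hL : 0 < L) (hd₀ : 0 < d₀) (hshadow : LipschitzShadowing f L d₀)
    (p : ℤ → EuclideanSpace ℝ (Fin m)) (hp : ∀ k : ℤ, p (k + 1) = f (p k))
    (A : ℤ → (EuclideanSpace ℝ (Fin m) →L[ℝ] EuclideanSpace ℝ (Fin m)))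
    (hA : ∀ k : ℤ, A k = fderiv ℝ f (p k))
    (N : ℝ) (hN : 0 < N) (hAbound : ∀ k : ℤ, ‖A k‖ ≤ N)
    (hunif : ∀ μ : ℝ, 0 < μ → ∃ δ : ℝ, 0 < δ ∧
      ∀ k : ℤ, ∀ v : EuclideanSpace ℝ (Fin m), ‖v‖ ≤ δ →
        ‖f (p k + v) - p (k + 1) - A k v‖ ≤ μ * ‖v‖)
    (w : ℤ → EuclideanSpace ℝ (Fin m)) (hw : ∀ k : ℤ, ‖w k‖ < 1) :
    ∃ v : ℤ → EuclideanSpace ℝ (Fin m),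
      (∀ k : ℤ, ‖v k‖ ≤ 8 * L + 1) ∧
      ∀ k : ℤ, v (k + 1) = A k (v k) + w k := by
  have hstage : ∀ j : ℕ, ∃ v : ℤ → EuclideanSpace ℝ (Fin m),
      (∀ k : ℤ, ‖v k‖ ≤ 2 * L) ∧
      ∀ k : ℤ, -((j:ℤ)+1) ≤ k → k < (j:ℤ)+1 →
        ‖v (k + 1) - A k (v k) - w k‖ ≤ 1 / ((j:ℝ)+1) := by
    intro j
    obtain ⟨v, h1, h2⟩ := stage_lemma f L d₀ hL hd₀ hshadow p hp A N hN hAbound hunif w hw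
      (j+1) (Nat.succ_pos j)
    refine ⟨v, h1, fun k hk hk2 => ?_⟩
    have h3 := h2 k (by push_cast; omega) (by push_cast; omega)
    have h4 : ((j+1 : ℕ):ℝ) = (j:ℝ) + 1 := by push_cast; ring
    rwa [h4] at h3
  choose vs hb hr using hstage
  set K : Set (ℤ → EuclideanSpace ℝ (Fin m)) :=
    Set.univ.pi (fun _ => Metric.closedBall (0 : EuclideanSpace ℝ (Fin m)) (2*L)) with hK
  have hKc : IsCompact K := isCompact_univ_pi fun _ => isCompact_closedBall _ _
  have hKcl : IsClosed K := isClosed_set_pi fun _ _ => Metric.isClosed_closedBall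
  have hvsK : ∀ j, vs j ∈ K := fun j =>
    Set.mem_univ_pi.2 fun k => by
      simpa [Metric.mem_closedBall, dist_zero_right] using hb j k
  set S : ℕ → Set (ℤ → EuclideanSpace ℝ (Fin m)) := fun j => closure (vs '' Set.Ici j) with hS
  have hSK : ∀ j, S j ⊆ K := fun j =>
    closure_minimal (by rintro _ ⟨i, _, rfl⟩; exact hvsK i) hKcl
  have hSne : ∀ j, (S j).Nonempty := fun j => ⟨vs j, subset_closure ⟨j, le_refl j, rfl⟩⟩
  have hSanti : ∀ {a b : ℕ}, a ≤ b → S b ⊆ S a := fun h =>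
    closure_mono (Set.image_mono (Set.Ici_subset_Ici.2 h))
  have hdir : Directed (· ⊇ ·) S := fun a b =>
    ⟨max a b, hSanti (le_max_left a b), hSanti (le_max_right a b)⟩
  obtain ⟨v, hv⟩ := IsCompact.nonempty_iInter_of_directed_nonempty_isCompact_isClosed S hdir hSne
    (fun j => hKc.of_isClosed_subset isClosed_closure (hSK j)) (fun j => isClosed_closure)
  simp only [Set.mem_iInter] at hv
  refine ⟨v, fun k => ?_, fun k => ?_⟩
  · have hm := hSK 0 (hv 0) k (Set.mem_univ k)
    rw [Metric.mem_closedBall, dist_zero_right] at hm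
    linarith
  · have cont : Continuous fun u : ℤ → EuclideanSpace ℝ (Fin m) =>
        ‖u (k+1) - A k (u k) - w k‖ :=
      (((continuous_apply (k+1)).sub ((A k).continuous.comp (continuous_apply k))).sub
        continuous_const).norm
    have hjb : ∀ j : ℕ, k.natAbs ≤ j → ‖v (k+1) - A k (v k) - w k‖ ≤ 1/((j:ℝ)+1) := by
      intro j hj
      have hsub : vs '' Set.Ici j ⊆
          {u : ℤ → EuclideanSpace ℝ (Fin m) | ‖u (k+1) - A k (u k) - w k‖ ≤ 1/((j:ℝ)+1)} := by
        rintro _ ⟨i, hi, rfl⟩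
        have hji : k.natAbs ≤ i := le_trans hj hi
        have h3 := hr i k (by omega) (by omega)
        have h4 : 1/((i:ℝ)+1) ≤ 1/((j:ℝ)+1) := by
          apply one_div_le_one_div_of_le (by positivity)
          have : (j:ℝ) ≤ (i:ℝ) := by exact_mod_cast hi
          linarith
        exact le_trans h3 h4
      have hclosed : IsClosed
          {u : ℤ → EuclideanSpace ℝ (Fin m) | ‖u (k+1) - A k (u k) - w k‖ ≤ 1/((j:ℝ)+1)} :=
        isClosed_le cont continuous_const
      exact (closure_minimal hsub hclosed) (hv j)
    have h0 : ‖v (k+1) - A k (v k) - w k‖ ≤ 0 := by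
      by_contra hcon
      push_neg at hcon
      obtain ⟨j, hj⟩ := exists_nat_one_div_lt hcon
      have h5 := hjb (max j k.natAbs) (le_max_right _ _)
      have h6 : 1/(((max j k.natAbs : ℕ) : ℝ) + 1) ≤ 1/((j:ℝ)+1) := by
        apply one_div_le_one_div_of_le (by positivity)
        have : (j:ℝ) ≤ ((max j k.natAbs : ℕ):ℝ) := by exact_mod_cast le_max_left j k.natAbs
        linarith
      linarith
    have h7 : v (k+1) - A k (v k) - w k = 0 :=
      norm_eq_zero.mp (le_antisymm h0 (norm_nonneg _))
    rw [sub_sub, sub_eq_zero] at h7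
    exact h7
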